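/- For d ≥ 1 and even j ≥ 0, the integer i = 4d + 2 + j(2d + 1) appears with coefficient 1 in the power series t^{2(2d+1)}/(1 - t²) and with coefficient 0 in the series t³/(1-t⁴) + (1 - t^{4d}) t^{4d+4} / ((1-t⁴)(1-t^{4d+2})). -/

import Mathlib

open PowerSeries Finset

noncomputable def geo (n : ℕ) : ℚ⟦X⟧ := mk fun k => if n ∣ k then 1 else 0

lemma one_sub_pow_mul_geo (n : ℕ) (hn : 0 < n) :
    (1 - (X : ℚ⟦X⟧) ^ n) * geo n = 1 := by
  ext k
  rw [sub_mul, one_mul, map_sub, coeff_X_pow_mul']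
  simp only [geo, coeff_mk, coeff_one]
  rcases Nat.eq_zero_or_pos k with rfl | hk
  · simp [hn.ne']
  · rw [if_neg hk.ne']
    by_cases h1 : n ≤ k
    · rw [if_pos h1]
      by_cases h2 : n ∣ k
      · rw [if_pos h2, if_pos (Nat.dvd_sub h2 dvd_rfl), sub_self]
      · rw [if_neg h2, if_neg, sub_zero]
        intro h3
        exact h2 (by have := Nat.dvd_add h3 (dvd_refl n); rwa [Nat.sub_add_cancel h1] at this)
    · rw [if_neg h1, if_neg (fun h2 => h1 (Nat.le_of_dvd hk h2)), sub_zero]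

lemma geo_inv (n : ℕ) (hn : 0 < n) : ((1 - (X : ℚ⟦X⟧) ^ n))⁻¹ = geo n := by
  rw [PowerSeries.inv_eq_iff_mul_eq_one, mul_comm, one_sub_pow_mul_geo n hn]
  simp [hn.ne']

lemma coeff_pow_mul_geo (a n i : ℕ) :
    coeff (R := ℚ) i ((X : ℚ⟦X⟧) ^ a * geo n) = if a ≤ i ∧ n ∣ i - a then 1 else 0 := by
  rw [coeff_X_pow_mul']
  simp only [geo, coeff_mk]
  split_ifs with h1 h2 h3 h4 <;> first | rfl | (exfalso; tauto)

/-- For `d ≥ 1` and even `j ≥ 0`, the integer `i = 4d + 2 + j(2d+1)`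
appears with coefficient `1` in the power series `t^{2(2d+1)}/(1 - t²)` and with
coefficient `0` in `t³/(1-t⁴) + (1 - t^{4d}) t^{4d+4} / ((1-t⁴)(1-t^{4d+2}))`. -/
theorem stmt_14 (d j : ℕ) (hd : 1 ≤ d) (hj : Even j) :
    coeff (R := ℚ) (4 * d + 2 + j * (2 * d + 1))
      ((X : ℚ⟦X⟧) ^ (2 * (2 * d + 1)) * (1 - X ^ 2)⁻¹) = 1 ∧
    coeff (R := ℚ) (4 * d + 2 + j * (2 * d + 1))
      ((X : ℚ⟦X⟧) ^ 3 * (1 - X ^ 4)⁻¹ +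
        (1 - (X : ℚ⟦X⟧) ^ (4 * d)) * X ^ (4 * d + 4) *
          ((1 - (X : ℚ⟦X⟧) ^ 4) * (1 - X ^ (4 * d + 2)))⁻¹) = 0 := by
  obtain ⟨r, rfl⟩ := hj
  set i := 4 * d + 2 + (r + r) * (2 * d + 1) with hi
  have heven : (r + r) * (2 * d + 1) = 2 * (r * (2 * d + 1)) := by ring
  constructor
  · rw [geo_inv 2 (by norm_num), coeff_pow_mul_geo]
    refine if_pos ⟨by omega, ⟨r * (2 * d + 1), by omega⟩⟩
  · have hfac : (1 - (X : ℚ⟦X⟧) ^ (4 * d)) = (1 - X ^ 4) * ∑ s ∈ range d, (X ^ 4) ^ s := by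
      have := geom_sum_mul ((X : ℚ⟦X⟧) ^ 4) d
      rw [← pow_mul] at this
      linear_combination this
    have hinv : ((1 - (X : ℚ⟦X⟧) ^ 4) * (1 - X ^ (4 * d + 2)))⁻¹
        = geo 4 * geo (4 * d + 2) := by
      rw [PowerSeries.inv_eq_iff_mul_eq_one]
      · calc geo 4 * geo (4 * d + 2) * ((1 - (X : ℚ⟦X⟧) ^ 4) * (1 - X ^ (4 * d + 2)))
            = ((1 - (X : ℚ⟦X⟧) ^ 4) * geo 4) * ((1 - X ^ (4 * d + 2)) * geo (4 * d + 2)) := by ring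
          _ = 1 := by rw [one_sub_pow_mul_geo 4 (by norm_num), one_sub_pow_mul_geo (4 * d + 2) (by omega), mul_one]
      · simp
    rw [hfac, hinv]
    have hcancel : (1 - (X : ℚ⟦X⟧) ^ 4) * (∑ s ∈ range d, ((X : ℚ⟦X⟧) ^ 4) ^ s) * X ^ (4 * d + 4) *
        (geo 4 * geo (4 * d + 2))
        = ∑ s ∈ range d, (X : ℚ⟦X⟧) ^ (4 * s + (4 * d + 4)) * geo (4 * d + 2) := by
      rw [Finset.mul_sum, Finset.sum_mul, Finset.sum_mul]
      refine Finset.sum_congr rfl fun s _ => ?_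
      have h4 := one_sub_pow_mul_geo 4 (by norm_num)
      calc (1 - (X : ℚ⟦X⟧) ^ 4) * (X ^ 4) ^ s * X ^ (4 * d + 4) * (geo 4 * geo (4 * d + 2))
          = ((1 - (X : ℚ⟦X⟧) ^ 4) * geo 4) * ((X ^ 4) ^ s * X ^ (4 * d + 4) * geo (4 * d + 2)) := by ring
        _ = (X : ℚ⟦X⟧) ^ (4 * s + (4 * d + 4)) * geo (4 * d + 2) := by
            rw [h4, one_mul, ← pow_mul, ← pow_add]
    rw [hcancel, map_add, map_sum, geo_inv 4 (by norm_num), coeff_pow_mul_geo]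
    rw [if_neg (by rintro ⟨h1, ⟨m, hm⟩⟩; omega), zero_add]
    refine Finset.sum_eq_zero fun s hs => ?_
    rw [coeff_pow_mul_geo, if_neg ?_]
    rintro ⟨h1, hdvd_sub⟩
    simp only [mem_range] at hs
    have hdvd_i : (4 * d + 2) ∣ i := ⟨r + 1, by rw [hi]; ring⟩
    have ha : (4 * d + 2) ∣ 4 * s + (4 * d + 4) := by
      have h2 := Nat.dvd_sub hdvd_i hdvd_sub
      rwa [show i - (i - (4 * s + (4 * d + 4))) = 4 * s + (4 * d + 4) from by omega] at h2
    obtain ⟨k, hk⟩ := ha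
    match k, hk with
    | 0, hk => omega
    | 1, hk => omega
    | (k + 2), hk =>
      have : (4 * d + 2) * (k + 2) ≥ 8 * d + 4 := by nlinarith
      omega
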